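/- arXiv:0907.0347 — 3 statements merged into one kernel-verified Lean document; each statement's English description precedes it below -/
import Mathlib

section
/- Let a₀ be an n×n real matrix and define ã(i,j) := a₀(i,j) − (1/n)∑_k a₀(k,j) − (1/n)∑_k a₀(i,k) + (1/n²)∑_{k,l} a₀(k,l). Then for a uniformly random permutation π of {1,...,n} (n≥2), Var(∑_i a₀(i,π(i))) = (1/(n−1))·∑_{i,j} ã(i,j)². -/
open Finset
open Equiv

lemma fiber_single_eq {n : ℕ} (i k k' : Fin n) :
    #(univ.filter fun π : Perm (Fin n) => π i = k)
      = #(univ.filter fun π : Perm (Fin n) => π i = k') := by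
  apply Finset.card_nbij' (fun π => Equiv.swap k k' * π) (fun π => Equiv.swap k k' * π)
  · intro π hπ
    simp only [mem_coe, mem_filter, mem_univ, true_and] at *
    simp [Equiv.Perm.mul_apply, hπ]
  · intro π hπ
    simp only [mem_coe, mem_filter, mem_univ, true_and] at *
    simp [Equiv.Perm.mul_apply, hπ]
  · intro π _; simp [← mul_assoc, Equiv.swap_mul_self]
  · intro π _; simp [← mul_assoc, Equiv.swap_mul_self]

lemma fiber_single_card {n : ℕ} (hn : 0 < n) (i k : Fin n) :
    (#(univ.filter fun π : Perm (Fin n) => π i = k) : ℝ) = (n.factorial : ℝ) / n := by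
  have h : (Nat.factorial n) = ∑ k' : Fin n, #(univ.filter fun π : Perm (Fin n) => π i = k') := by
    have := Finset.card_eq_sum_card_fiberwise
      (f := fun π : Perm (Fin n) => π i) (s := univ) (t := univ) (fun π _ => mem_univ _)
    rw [← this]
    simp [Fintype.card_perm]
  have h2 : (Nat.factorial n) = n * #(univ.filter fun π : Perm (Fin n) => π i = k) := by
    rw [h, Finset.sum_congr rfl (fun k' _ => fiber_single_eq i k' k), sum_const]
    simp [mul_comm]
  have hn' : (n:ℝ) ≠ 0 := by positivity
  have := congrArg (Nat.cast (R := ℝ)) h2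
  push_cast at this
  field_simp
  linarith


lemma exists_perm_pair {n : ℕ} {k l k' l' : Fin n} (hkl : k ≠ l) (hkl' : k' ≠ l') :
    ∃ σ : Perm (Fin n), σ k = k' ∧ σ l = l' := by
  refine ⟨Equiv.swap l' (Equiv.swap k k' l) * Equiv.swap k k', ?_, ?_⟩
  · have hm : Equiv.swap k k' l ≠ k' := by
      intro h
      have := congrArg (Equiv.swap k k') h
      simp at this
      exact hkl this.symm
    simp only [Equiv.Perm.mul_apply, Equiv.swap_apply_left]
    exact Equiv.swap_apply_of_ne_of_ne hkl' (Ne.symm hm)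
  · simp [Equiv.Perm.mul_apply, Equiv.swap_apply_right]

lemma fiber_pair_eq {n : ℕ} {i j : Fin n} {k l k' l' : Fin n}
    (hkl : k ≠ l) (hkl' : k' ≠ l') :
    #(univ.filter fun π : Perm (Fin n) => (π i, π j) = (k, l))
      = #(univ.filter fun π : Perm (Fin n) => (π i, π j) = (k', l')) := by
  obtain ⟨σ, h1, h2⟩ := exists_perm_pair hkl hkl'
  apply Finset.card_nbij' (fun π => σ * π) (fun π => σ⁻¹ * π)
  · intro π hπ
    simp only [mem_coe, mem_filter, mem_univ, true_and, Prod.mk.injEq] at *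
    simp [Equiv.Perm.mul_apply, hπ.1, hπ.2, h1, h2]
  · intro π hπ
    simp only [mem_coe, mem_filter, mem_univ, true_and, Prod.mk.injEq] at *
    constructor
    · rw [Equiv.Perm.mul_apply, hπ.1, ← h1]; simp
    · rw [Equiv.Perm.mul_apply, hπ.2, ← h2]; simp
  · intro π _; simp [← mul_assoc]
  · intro π _; simp [← mul_assoc]

lemma fiber_pair_card {n : ℕ} {i j : Fin n} (hij : i ≠ j) {k l : Fin n} (hkl : k ≠ l) :
    (#(univ.filter fun π : Perm (Fin n) => (π i, π j) = (k, l)) : ℝ)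
      = (n.factorial : ℝ) / (n * (n - 1)) := by
  have hn : 2 ≤ n := by
    have : 1 < Fintype.card (Fin n) := Fintype.one_lt_card_iff.mpr ⟨k, l, hkl⟩
    simp at this; omega
  have hmaps : ∀ π : Perm (Fin n), π ∈ (univ : Finset (Perm (Fin n))) →
      (π i, π j) ∈ (univ : Finset (Fin n)).offDiag := fun π _ =>
    Finset.mem_offDiag.mpr ⟨mem_univ _, mem_univ _, fun h => hij (π.injective h)⟩
  have h : (Nat.factorial n) = ∑ p ∈ (univ : Finset (Fin n)).offDiag,
      #(univ.filter fun π : Perm (Fin n) => (π i, π j) = p) := by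
    have := Finset.card_eq_sum_card_fiberwise
      (f := fun π : Perm (Fin n) => (π i, π j)) (s := univ) (t := (univ : Finset (Fin n)).offDiag)
      hmaps
    rw [← this]
    simp [Fintype.card_perm]
  have h2 : (Nat.factorial n) = (n * n - n) *
      #(univ.filter fun π : Perm (Fin n) => (π i, π j) = (k, l)) := by
    have heq : ∀ p ∈ (univ : Finset (Fin n)).offDiag,
        #(univ.filter fun π : Perm (Fin n) => (π i, π j) = p)
          = #(univ.filter fun π : Perm (Fin n) => (π i, π j) = (k, l)) := by
      rintro ⟨p1, p2⟩ hp
      obtain ⟨-, -, hp⟩ := Finset.mem_offDiag.mp hp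
      exact fiber_pair_eq hp hkl
    rw [h, Finset.sum_congr rfl heq, sum_const, Finset.offDiag_card, smul_eq_mul]
    simp [Finset.card_univ]
  have hne : (n:ℝ) * ((n:ℝ) - 1) ≠ 0 := by
    have : (2:ℝ) ≤ (n:ℝ) := by exact_mod_cast hn
    nlinarith
  have hle : n ≤ n * n := Nat.le_mul_of_pos_left n (by omega)
  have hc := congrArg (Nat.cast (R := ℝ)) h2
  push_cast [Nat.cast_sub hle] at hc
  simp only [Prod.mk.injEq] at hc ⊢
  rw [eq_div_iff hne]
  linear_combination -hc


lemma sum_single {n : ℕ} (hn : 0 < n) (i : Fin n) (f : Fin n → ℝ) :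
    ∑ π : Perm (Fin n), f (π i) = ((n.factorial : ℝ) / n) * ∑ k, f k := by
  rw [← Finset.sum_fiberwise_of_maps_to (g := fun π : Perm (Fin n) => π i)
    (t := univ) (fun π _ => mem_univ _) (fun π => f (π i))]
  rw [Finset.mul_sum]
  refine Finset.sum_congr rfl fun k _ => ?_
  rw [Finset.sum_congr rfl (fun π hπ => by
    rw [(Finset.mem_filter.mp hπ).2]), sum_const, nsmul_eq_mul, fiber_single_card hn i k]

lemma sum_pair {n : ℕ} {i j : Fin n} (hij : i ≠ j) (g : Fin n → Fin n → ℝ) :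
    ∑ π : Perm (Fin n), g (π i) (π j)
      = ((n.factorial : ℝ) / (n * (n - 1))) * ∑ p ∈ (univ : Finset (Fin n)).offDiag, g p.1 p.2 := by
  rw [← Finset.sum_fiberwise_of_maps_to (g := fun π : Perm (Fin n) => (π i, π j))
    (t := (univ : Finset (Fin n)).offDiag)
    (fun π _ => Finset.mem_offDiag.mpr ⟨mem_univ _, mem_univ _, fun h => hij (π.injective h)⟩)
    (fun π => g (π i) (π j))]
  rw [Finset.mul_sum]
  refine Finset.sum_congr rfl fun p hp => ?_
  rcases p with ⟨k, l⟩
  obtain ⟨-, -, hp'⟩ := Finset.mem_offDiag.mp hp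
  simp only at hp' ⊢
  rw [Finset.sum_congr rfl (fun π hπ => by
      have h := (Finset.mem_filter.mp hπ).2
      rw [show π i = k from congrArg Prod.fst h, show π j = l from congrArg Prod.snd h]),
    sum_const, nsmul_eq_mul, fiber_pair_card hij hp']

lemma offDiag_sum {n : ℕ} (g : Fin n → Fin n → ℝ) :
    ∑ p ∈ (univ : Finset (Fin n)).offDiag, g p.1 p.2
      = (∑ i, ∑ j, g i j) - ∑ i, g i i := by
  have h1 : ∑ p ∈ (univ : Finset (Fin n)) ×ˢ univ, g p.1 p.2 = ∑ i, ∑ j, g i j :=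
    Finset.sum_product' _ _ _
  have h2 : ∑ p ∈ (univ : Finset (Fin n)).diag, g p.1 p.2 = ∑ i, g i i := by
    rw [Finset.sum_diag]
  rw [← h1, ← h2, ← Finset.diag_union_offDiag (univ : Finset (Fin n)),
    Finset.sum_union (Finset.disjoint_diag_offDiag _)]
  ring


/-- Hoeffding variance formula: for a uniformly random permutation π of
{1,...,n} (n ≥ 2) and the doubly-centred matrix ã,
Var(∑_i a₀(i,π(i))) = (1/(n−1))·∑_{i,j} ã(i,j)². -/
theorem stmt2 (n : ℕ) (hn : 2 ≤ n) (a₀ ta : Fin n → Fin n → ℝ)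
    (hta : ∀ i j : Fin n, ta i j =
      a₀ i j - (1 / (n : ℝ)) * ∑ k : Fin n, a₀ k j
        - (1 / (n : ℝ)) * ∑ k : Fin n, a₀ i k
        + (1 / (n : ℝ)^2) * ∑ k : Fin n, ∑ l : Fin n, a₀ k l) :
    (∑ π : Equiv.Perm (Fin n), (∑ i : Fin n, a₀ i (π i))^2) / (Nat.factorial n : ℝ)
      - ((∑ π : Equiv.Perm (Fin n), ∑ i : Fin n, a₀ i (π i)) / (Nat.factorial n : ℝ))^2
      = (1 / ((n : ℝ) - 1)) * ∑ i : Fin n, ∑ j : Fin n, (ta i j)^2 := by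
  have hnpos : 0 < n := by omega
  have hn2 : (2:ℝ) ≤ (n:ℝ) := by exact_mod_cast hn
  have hn0 : (n:ℝ) ≠ 0 := by positivity
  have hn1 : (n:ℝ) - 1 ≠ 0 := by linarith
  set N : ℝ := (n.factorial : ℝ) with hN
  have hNpos : 0 < N := by rw [hN]; exact_mod_cast n.factorial_pos
  have hN0 : N ≠ 0 := ne_of_gt hNpos
  set T : ℝ := ∑ k : Fin n, ∑ l : Fin n, a₀ k l with hT
  set μ : ℝ := (1/(n:ℝ)) * T with hμ
  -- row sums of ta vanish
  have hrow : ∀ i, ∑ j, ta i j = 0 := by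
    intro i
    have hcomm : ∑ j : Fin n, ∑ k : Fin n, a₀ k j = T := Finset.sum_comm
    simp only [hta, Finset.sum_add_distrib, Finset.sum_sub_distrib, ← Finset.mul_sum,
      Finset.sum_const, Finset.card_univ, Fintype.card_fin, nsmul_eq_mul, hcomm, ← hT]
    field_simp
    ring
  -- column sums of ta vanish
  have hcol : ∀ j, ∑ i, ta i j = 0 := by
    intro j
    simp only [hta, Finset.sum_add_distrib, Finset.sum_sub_distrib, ← Finset.mul_sum,
      Finset.sum_const, Finset.card_univ, Fintype.card_fin, nsmul_eq_mul, ← hT]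
    field_simp
    ring
  -- relation between sums of a₀ and ta over a permutation
  have hS : ∀ π : Perm (Fin n), ∑ i, a₀ i (π i) = (∑ i, ta i (π i)) + μ := by
    intro π
    have hperm : ∑ i : Fin n, ∑ k : Fin n, a₀ k (π i) = ∑ j : Fin n, ∑ k : Fin n, a₀ k j :=
      Equiv.sum_comp π (fun j => ∑ k, a₀ k j)
    have hcomm : ∑ j : Fin n, ∑ k : Fin n, a₀ k j = T := Finset.sum_comm
    simp only [hta, Finset.sum_add_distrib, Finset.sum_sub_distrib, ← Finset.mul_sum,
      Finset.sum_const, Finset.card_univ, Fintype.card_fin, nsmul_eq_mul, hperm, hcomm, ← hT, hμ]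
    field_simp
    ring
  -- expectation of centred sum is zero
  have h1 : ∑ π : Perm (Fin n), ∑ i, ta i (π i) = 0 := by
    rw [Finset.sum_comm]
    rw [Finset.sum_congr rfl (fun i _ => sum_single hnpos i (ta i))]
    simp [hrow]
  set Sg : ℝ := ∑ i : Fin n, ∑ j : Fin n, ta i j * ta i j with hSg
  -- second moment of centred sum
  have h2 : ∑ π : Perm (Fin n), (∑ i, ta i (π i))^2
      = (N/n) * Sg + (N/(n*((n:ℝ)-1))) * Sg := by
    have hsq : ∀ π : Perm (Fin n), (∑ i, ta i (π i))^2
        = ∑ i, ∑ j, ta i (π i) * ta j (π j) := by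
      intro π; rw [sq, Finset.sum_mul_sum]
    rw [Finset.sum_congr rfl (fun π _ => hsq π)]
    rw [Finset.sum_comm]
    rw [Finset.sum_congr rfl (fun i _ => Finset.sum_comm)]
    -- now : ∑ i, ∑ j, ∑ π, ta i (π i) * ta j (π j)
    have hdiag : ∀ i : Fin n, ∑ π : Perm (Fin n), ta i (π i) * ta i (π i)
        = (N/n) * ∑ k, ta i k * ta i k := fun i => sum_single hnpos i (fun k => ta i k * ta i k)
    have hoff : ∀ i j : Fin n, i ≠ j → ∑ π : Perm (Fin n), ta i (π i) * ta j (π j)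
        = -(N/(n*((n:ℝ)-1))) * ∑ k, ta i k * ta j k := by
      intro i j hij
      rw [sum_pair hij (fun k l => ta i k * ta j l), offDiag_sum (fun k l => ta i k * ta j l)]
      have : ∑ k : Fin n, ∑ l : Fin n, ta i k * ta j l = 0 := by
        rw [← Finset.sum_mul_sum, hrow i]; ring
      rw [this]
      ring
    -- split the double sum over (i,j) into diagonal and off-diagonal parts
    have hsplit : ∑ i : Fin n, ∑ j : Fin n, (∑ π : Perm (Fin n), ta i (π i) * ta j (π j))
        = (∑ p ∈ (univ : Finset (Fin n)).offDiag, ∑ π : Perm (Fin n), ta p.1 (π p.1) * ta p.2 (π p.2))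
          + ∑ i : Fin n, ∑ π : Perm (Fin n), ta i (π i) * ta i (π i) := by
      rw [offDiag_sum (fun i j => ∑ π : Perm (Fin n), ta i (π i) * ta j (π j))]
      ring
    rw [hsplit]
    have hoffsum : (∑ p ∈ (univ : Finset (Fin n)).offDiag,
        ∑ π : Perm (Fin n), ta p.1 (π p.1) * ta p.2 (π p.2))
        = (N/(n*((n:ℝ)-1))) * Sg := by
      rw [Finset.sum_congr rfl (fun p hp => hoff p.1 p.2 (Finset.mem_offDiag.mp hp).2.2)]
      rw [← Finset.mul_sum, offDiag_sum (fun i j => ∑ k, ta i k * ta j k)]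
      have hz : ∑ i : Fin n, ∑ j : Fin n, ∑ k : Fin n, ta i k * ta j k = 0 := by
        have e1 : ∀ i : Fin n, ∑ j : Fin n, ∑ k : Fin n, ta i k * ta j k
            = ∑ k : Fin n, ∑ j : Fin n, ta i k * ta j k := fun i => Finset.sum_comm
        rw [Finset.sum_congr rfl fun i _ => e1 i, Finset.sum_comm]
        refine Finset.sum_eq_zero fun k _ => ?_
        rw [← Finset.sum_mul_sum, hcol k, zero_mul]
      rw [hz, hSg]
      ring
    rw [hoffsum, Finset.sum_congr rfl (fun i _ => hdiag i), ← Finset.mul_sum, ← hSg]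
    ring
  -- assemble
  have hcard : (#(univ : Finset (Perm (Fin n))) : ℝ) = N := by
    rw [Finset.card_univ, Fintype.card_perm, Fintype.card_fin, hN]
  have hsum1 : ∑ π : Perm (Fin n), ∑ i, a₀ i (π i) = N * μ := by
    rw [Finset.sum_congr rfl (fun π _ => hS π), Finset.sum_add_distrib, h1,
      Finset.sum_const, nsmul_eq_mul, hcard]
    ring
  have hsum2 : ∑ π : Perm (Fin n), (∑ i, a₀ i (π i))^2
      = ((N/n) * Sg + (N/(n*((n:ℝ)-1))) * Sg) + N * μ^2 := by
    have e : ∀ π : Perm (Fin n), (∑ i, a₀ i (π i))^2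
        = (∑ i, ta i (π i))^2 + (2*μ) * (∑ i, ta i (π i)) + μ^2 := fun π => by rw [hS π]; ring
    rw [Finset.sum_congr rfl fun π _ => e π, Finset.sum_add_distrib, Finset.sum_add_distrib,
      h2, ← Finset.mul_sum, h1, Finset.sum_const, nsmul_eq_mul, hcard]
    ring
  have hfin : ∑ i : Fin n, ∑ j : Fin n, (ta i j)^2 = Sg := by
    simp [hSg, pow_two]
  rw [hsum1, hsum2, hfin]
  field_simp
  ring
end

section
/- For a uniformly random permutation π of {1,...,n} with n ≥ 2 and I_i := 1{π(i) ≥ i}, one has for i < j: E[I_i I_j] = (n − i)(n − j + 1)/((n − 1)n). -/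
open Finset

/-- For i < j (0-based `Fin n` indices; the 1-based formula
(n−i)(n−j+1)/((n−1)n) becomes (n−i−1)(n−j)/((n−1)n)):
E[I_i I_j] = (n−i−1)(n−j)/((n−1)n). -/
theorem stmt10 (n : ℕ) (hn : 2 ≤ n) (i j : Fin n) (hij : i < j) :
    (∑ π : Equiv.Perm (Fin n),
        (if i ≤ π i then (1 : ℝ) else 0) * (if j ≤ π j then (1 : ℝ) else 0))
        / (Nat.factorial n : ℝ)
      = ((n : ℝ) - (i : ℕ) - 1) * ((n : ℝ) - (j : ℕ)) / (((n : ℝ) - 1) * n) := by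
  classical
  have hijne : i ≠ j := ne_of_lt hij
  set N : Fin n → Fin n → ℕ := fun a b =>
    (univ.filter fun π : Equiv.Perm (Fin n) => π i = a ∧ π j = b).card with hN
  -- all off-diagonal fibers have the same cardinality
  have fiber_eq : ∀ a b a' b' : Fin n, a ≠ b → a' ≠ b' → N a b = N a' b' := by
    intro a b a' b' hab hab'
    set b'' := Equiv.swap a a' b with hb''
    have hb''a' : b'' ≠ a' := by
      intro h
      apply hab
      have : Equiv.swap a a' b = Equiv.swap a a' a := by
        rw [Equiv.swap_apply_left]; exact h
      exact (Equiv.swap a a').injective this.symm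
    set σ := Equiv.swap b'' b' * Equiv.swap a a' with hσ
    have hσa : σ a = a' := by
      rw [hσ, Equiv.Perm.mul_apply, Equiv.swap_apply_left,
        Equiv.swap_apply_of_ne_of_ne hb''a'.symm hab']
    have hσb : σ b = b' := by
      rw [hσ, Equiv.Perm.mul_apply, ← hb'', Equiv.swap_apply_left]
    apply Finset.card_bij' (fun π _ => σ * π) (fun π _ => σ⁻¹ * π)
    · intro π hπ
      simp only [mem_filter, mem_univ, true_and] at hπ ⊢
      simp [Equiv.Perm.mul_apply, hπ.1, hπ.2, hσa, hσb]
    · intro π hπ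
      simp only [mem_filter, mem_univ, true_and] at hπ ⊢
      constructor
      · simp [Equiv.Perm.mul_apply, hπ.1, ← hσa]
      · simp [Equiv.Perm.mul_apply, hπ.2, ← hσb]
    · intro π _; simp [← mul_assoc]
    · intro π _; simp [← mul_assoc]
  have Nzero : ∀ a : Fin n, N a a = 0 := by
    intro a
    rw [hN]
    simp only [Finset.card_eq_zero, Finset.filter_eq_empty_iff]
    rintro π - ⟨h1, h2⟩
    exact hijne (π.injective (h1.trans h2.symm))
  set c : ℕ := N i j with hc
  have Nval : ∀ a b : Fin n, N a b = if a = b then 0 else c := by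
    intro a b
    split
    · next h => rw [h]; exact Nzero b
    · next h => exact fiber_eq a b i j h hijne
  -- grouping sums over permutations by the values (π i, π j)
  have key : ∀ F : Fin n → Fin n → ℝ,
      ∑ π : Equiv.Perm (Fin n), F (π i) (π j)
        = ∑ a : Fin n, ∑ b : Fin n, (N a b : ℝ) * F a b := by
    intro F
    rw [← Finset.sum_fiberwise univ (fun π : Equiv.Perm (Fin n) => (π i, π j))
        (fun π => F (π i) (π j)), Fintype.sum_prod_type]
    refine Finset.sum_congr rfl fun a _ => Finset.sum_congr rfl fun b _ => ?_
    have hfilter : (univ.filter fun π : Equiv.Perm (Fin n) => (π i, π j) = (a, b))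
        = univ.filter fun π : Equiv.Perm (Fin n) => π i = a ∧ π j = b := by
      apply Finset.filter_congr; intro π _; simp [Prod.ext_iff]
    calc ∑ π ∈ univ.filter fun π : Equiv.Perm (Fin n) => (π i, π j) = (a, b),
            F (π i) (π j)
        = ∑ π ∈ univ.filter fun π : Equiv.Perm (Fin n) => (π i, π j) = (a, b), F a b := by
          refine Finset.sum_congr rfl fun π hπ => ?_
          simp only [mem_filter, Prod.ext_iff] at hπ
          rw [hπ.2.1, hπ.2.2]
      _ = (N a b : ℝ) * F a b := by
          rw [Finset.sum_const, nsmul_eq_mul, hfilter]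
  -- total count
  have total : (Nat.factorial n : ℝ) = (c : ℝ) * ((n : ℝ) * n - n) := by
    have h1 := key (fun _ _ => (1 : ℝ))
    simp only [mul_one] at h1
    rw [Finset.sum_const, Finset.card_univ, Fintype.card_perm, Fintype.card_fin,
      nsmul_eq_mul, mul_one] at h1
    rw [h1]
    have : ∀ a : Fin n, ∑ b : Fin n, (N a b : ℝ) = (n : ℝ) * c - c := by
      intro a
      have : ∀ b : Fin n, (N a b : ℝ) = c - (if a = b then (c : ℝ) else 0) := by
        intro b; rw [Nval]; split <;> simp
      rw [Finset.sum_congr rfl fun b _ => this b, Finset.sum_sub_distrib,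
        Finset.sum_const, Finset.sum_ite_eq, if_pos (mem_univ a)]
      simp [Finset.card_univ, mul_comm]
    rw [Finset.sum_congr rfl fun a _ => this a, Finset.sum_const, Finset.card_univ,
      Fintype.card_fin, nsmul_eq_mul]
    ring
  have hfact : (Nat.factorial n : ℝ) ≠ 0 := by
    exact_mod_cast Nat.factorial_ne_zero n
  have hcne : (c : ℝ) ≠ 0 := by
    intro h; rw [total, h, zero_mul] at hfact; exact hfact rfl
  -- sums of single indicators
  have hsum : ∀ k : Fin n, ∑ a : Fin n, (if k ≤ a then (1 : ℝ) else 0) = (n : ℝ) - (k : ℕ) := by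
    intro k
    rw [Finset.sum_boole]
    have : (univ.filter fun a : Fin n => k ≤ a) = Finset.Ici k := by
      ext a; simp
    rw [this, Fin.card_Ici, Nat.cast_sub k.isLt.le]
  have hsum_ij : ∑ a : Fin n, (if i ≤ a then (1 : ℝ) else 0) * (if j ≤ a then (1 : ℝ) else 0)
      = (n : ℝ) - (j : ℕ) := by
    rw [← hsum j]
    refine Finset.sum_congr rfl fun a _ => ?_
    rcases le_or_gt j a with h | h
    · rw [if_pos h, if_pos (le_trans hij.le h), one_mul]
    · rw [if_neg (not_le.mpr h), mul_zero]
  -- the main sum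
  have main : ∑ π : Equiv.Perm (Fin n),
      (if i ≤ π i then (1 : ℝ) else 0) * (if j ≤ π j then (1 : ℝ) else 0)
      = (c : ℝ) * (((n : ℝ) - (i : ℕ)) * ((n : ℝ) - (j : ℕ)) - ((n : ℝ) - (j : ℕ))) := by
    rw [key (fun a b => (if i ≤ a then (1 : ℝ) else 0) * (if j ≤ b then (1 : ℝ) else 0))]
    have step : ∀ a b : Fin n, (N a b : ℝ) *
          ((if i ≤ a then (1 : ℝ) else 0) * (if j ≤ b then (1 : ℝ) else 0))
        = (c : ℝ) * ((if i ≤ a then (1 : ℝ) else 0) * (if j ≤ b then (1 : ℝ) else 0))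
          - (c : ℝ) * (if a = b then (if i ≤ a then (1 : ℝ) else 0) *
              (if j ≤ b then (1 : ℝ) else 0) else 0) := by
      intro a b
      rw [Nval]
      split
      · next h => simp [h]
      · next h => simp
    simp only [step]
    rw [Finset.sum_congr rfl fun a _ => Finset.sum_sub_distrib _ _, Finset.sum_sub_distrib]
    simp only [← Finset.mul_sum]
    have hdiag : ∑ a : Fin n, ∑ b : Fin n,
        (if a = b then (if i ≤ a then (1 : ℝ) else 0) * (if j ≤ b then 1 else 0) else 0)
        = (n : ℝ) - (j : ℕ) := by
      rw [← hsum_ij]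
      refine Finset.sum_congr rfl fun a _ => ?_
      rw [Finset.sum_ite_eq, if_pos (mem_univ a)]
    rw [hsum j, ← Finset.sum_mul, hsum i, hdiag]
    ring
  rw [main, total]
  rw [mul_div_mul_left _ _ hcne]
  have h2 : (2 : ℝ) ≤ (n : ℝ) := by exact_mod_cast hn
  have hd1 : (0 : ℝ) < (n : ℝ) * n - n := by nlinarith
  have hd2 : (0 : ℝ) < ((n : ℝ) - 1) * n := by nlinarith
  rw [div_eq_div_iff hd1.ne' hd2.ne']
  ring
end

section
/- For 0 ≤ t ≤ u ≤ 1, 6·∫₀ᵗ∫₀ᵘ [(1 − max(x,y)) − (1−x)(1−y)] dy dx = 3t²u − t³ − (3/2)t²u². -/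
lemma stmt14_inner (x u : ℝ) (hx : 0 ≤ x) (hxu : x ≤ u) :
    ∫ y in (0:ℝ)..u, ((1 - max x y) - (1 - x) * (1 - y))
      = x * u - x ^ 2 / 2 - x * u ^ 2 / 2 := by
  have h1 : ∀ y : ℝ, (1 - max x y) - (1 - x) * (1 - y) = min x y - x * y := by
    intro y; rcases le_total x y with h | h
    · rw [max_eq_right h, min_eq_left h]; ring
    · rw [max_eq_left h, min_eq_right h]; ring
  simp only [h1]
  have hc : Continuous fun y : ℝ => min x y - x * y :=
    ((continuous_const.min continuous_id).sub (continuous_const.mul continuous_id))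
  have hsplit : (∫ y in (0:ℝ)..x, (min x y - x * y)) + ∫ y in x..u, (min x y - x * y)
      = ∫ y in (0:ℝ)..u, (min x y - x * y) :=
    intervalIntegral.integral_add_adjacent_intervals (hc.intervalIntegrable _ _)
      (hc.intervalIntegrable _ _)
  rw [← hsplit]
  have e1 : (∫ y in (0:ℝ)..x, (min x y - x * y)) = ∫ y in (0:ℝ)..x, (y - x * y) := by
    apply intervalIntegral.integral_congr
    intro y hy
    rw [Set.uIcc_of_le hx] at hy
    show min x y - x * y = y - x * y
    rw [min_eq_right hy.2]
  have e2 : (∫ y in x..u, (min x y - x * y)) = ∫ y in x..u, (x - x * y) := by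
    apply intervalIntegral.integral_congr
    intro y hy
    rw [Set.uIcc_of_le hxu] at hy
    show min x y - x * y = x - x * y
    rw [min_eq_left hy.1]
  rw [e1, e2]
  have c1 : (∫ y in (0:ℝ)..x, (y - x * y)) = x ^ 2 / 2 - x * (x ^ 2 / 2) := by
    rw [intervalIntegral.integral_sub ((by continuity : Continuous _).intervalIntegrable _ _) ((by continuity : Continuous _).intervalIntegrable _ _),
      intervalIntegral.integral_const_mul, integral_id]
    ring
  have c2 : (∫ y in x..u, (x - x * y)) = x * (u - x) - x * (u ^ 2 / 2 - x ^ 2 / 2) := by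
    rw [intervalIntegral.integral_sub ((by continuity : Continuous _).intervalIntegrable _ _) ((by continuity : Continuous _).intervalIntegrable _ _),
      intervalIntegral.integral_const_mul, integral_id,
      intervalIntegral.integral_const, smul_eq_mul]
    ring
  rw [c1, c2]; ring

/-- For 0 ≤ t ≤ u ≤ 1,
6∫₀ᵗ∫₀ᵘ [(1 − max(x,y)) − (1−x)(1−y)] dy dx = 3t²u − t³ − (3/2)t²u². -/
theorem stmt14 (t u : ℝ) (ht : 0 ≤ t) (htu : t ≤ u) (hu : u ≤ 1) :
    6 * ∫ x in (0:ℝ)..t, ∫ y in (0:ℝ)..u,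
        ((1 - max x y) - (1 - x) * (1 - y))
      = 3 * t^2 * u - t^3 - (3 / 2) * t^2 * u^2 := by
  have e : (∫ x in (0:ℝ)..t, ∫ y in (0:ℝ)..u, ((1 - max x y) - (1 - x) * (1 - y)))
      = ∫ x in (0:ℝ)..t, (x * u - x ^ 2 / 2 - x * u ^ 2 / 2) := by
    apply intervalIntegral.integral_congr
    intro x hx
    rw [Set.uIcc_of_le ht] at hx
    exact stmt14_inner x u hx.1 (hx.2.trans htu)
  rw [e]
  rw [intervalIntegral.integral_sub ((by continuity : Continuous _).intervalIntegrable _ _) ((by continuity : Continuous _).intervalIntegrable _ _),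
    intervalIntegral.integral_sub ((by continuity : Continuous _).intervalIntegrable _ _) ((by continuity : Continuous _).intervalIntegrable _ _)]
  have i1 : (∫ x in (0:ℝ)..t, x * u) = t ^ 2 / 2 * u := by
    rw [intervalIntegral.integral_mul_const, integral_id]; ring
  have i2 : (∫ x in (0:ℝ)..t, x ^ 2 / 2) = t ^ 3 / 6 := by
    rw [intervalIntegral.integral_div, integral_pow]; ring
  have i3 : (∫ x in (0:ℝ)..t, x * u ^ 2 / 2) = t ^ 2 / 2 * u ^ 2 / 2 := by
    have : ∀ x : ℝ, x * u ^ 2 / 2 = x * (u ^ 2 / 2) := fun x => by ring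
    simp only [this]
    rw [intervalIntegral.integral_mul_const, integral_id]; ring
  rw [i1, i2, i3]; ring
end
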